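/- Let S be a planar star body with continuous positive radial function ρ(S,·), area A(S) = (1/2)∫_0^{2π} ρ(S,θ)² dθ, and dual mixed area Ã(S,B) = (1/2)∫_0^{2π} ρ(S,θ) dθ. Let k ≥ 2 be an integer and suppose that for every n whose quotient n/k is an even integer, the nth Fourier coefficients of ρ(S,·) vanish. Then for every λ with 0 ≤ λ ≤ k/π, ∫_0^{π/k} ρ_k(S,θ) ρ_k(S,θ+π/k) dθ ≤ k·A(S) + λ(Ã(S,B)² − π·A(S)), where ρ_k(S,θ) = ∑_{m=0}^{k-1} ρ(S, θ + 2mπ/k). -/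

import Mathlib

open Real Finset
open MeasureTheory Complex

lemma fourier_unique {T : ℝ} [hT : Fact (0 < T)] (F : C(AddCircle T, ℂ))
    (h : ∀ n : ℤ, fourierCoeff (F : AddCircle T → ℂ) n = 0) : ∀ x, F x = 0 := by
  have hs : Summable (fourierCoeff (F : AddCircle T → ℂ)) := by
    have : (fourierCoeff (F : AddCircle T → ℂ)) = fun _ => 0 := funext h
    rw [this]; exact summable_zero
  have h1 := hasSum_fourier_series_of_summable hs
  simp only [h, zero_smul] at h1
  have h2 : HasSum (fun _ : ℤ => (0 : C(AddCircle T, ℂ))) 0 := hasSum_zero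
  have h3 := h1.unique h2
  intro x; rw [h3]; rfl

lemma sum_range_two_mul (f : ℕ → ℝ) (n : ℕ) :
    ∑ m ∈ range (2*n), f m = ∑ m ∈ range n, f (2*m) + ∑ m ∈ range n, f (2*m+1) := by
  induction n with
  | zero => simp
  | succ n ih =>
    have : 2 * (n+1) = (2*n) + 1 + 1 := by ring
    rw [this, sum_range_succ, sum_range_succ, sum_range_succ (fun m => f (2*m)),
      sum_range_succ (fun m => f (2*m+1)), ih]
    ring

lemma shift_aux (ρ : ℝ → ℝ) (hρ : Continuous ρ) (hper : ∀ θ, ρ (θ + 2 * π) = ρ θ)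
    (n : ℤ) (s : ℝ) :
    (∫ x in (0:ℝ)..(2*π), Complex.exp (Complex.I * (-n) * x) * (ρ (x + s) : ℂ)) =
      Complex.exp (Complex.I * n * s) *
        ∫ x in (0:ℝ)..(2*π), Complex.exp (Complex.I * (-n) * x) * (ρ x : ℂ) := by
  set F1 : ℝ → ℂ := fun y => Complex.exp (Complex.I * (-n) * (y - s)) * (ρ y : ℂ) with hF1
  have h2 : Function.Periodic F1 (2*π) := by
    intro y
    simp only [hF1]
    have harg : Complex.I * (-n) * (((y + 2*π : ℝ) : ℂ) - s) =
        Complex.I * (-n) * ((y:ℂ) - s) + (-n : ℤ) * (2*π*Complex.I) := by push_cast; ring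
    rw [harg, Complex.exp_add, Complex.exp_int_mul_two_pi_mul_I, mul_one, hper]
  calc (∫ x in (0:ℝ)..(2*π), Complex.exp (Complex.I * (-n) * x) * (ρ (x + s) : ℂ))
      = ∫ x in (0:ℝ)..(2*π), F1 (x + s) := by
        apply intervalIntegral.integral_congr
        intro x _
        simp only [hF1]
        push_cast
        rw [add_sub_cancel_right]
    _ = ∫ y in (0+s)..(2*π+s), F1 y := intervalIntegral.integral_comp_add_right F1 s
    _ = ∫ y in s..(s+2*π), F1 y := by rw [zero_add, add_comm (2*π) s]
    _ = ∫ y in (0:ℝ)..(0+2*π), F1 y := h2.intervalIntegral_add_eq s 0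
    _ = Complex.exp (Complex.I * n * s) *
        ∫ x in (0:ℝ)..(2*π), Complex.exp (Complex.I * (-n) * x) * (ρ x : ℂ) := by
        rw [zero_add, ← intervalIntegral.integral_const_mul]
        apply intervalIntegral.integral_congr
        intro x _
        simp only [hF1]
        rw [← mul_assoc, ← Complex.exp_add]
        congr 2
        push_cast
        ring

lemma In0_aux (ρ : ℝ → ℝ) (a b : ℕ → ℝ) (hρ : Continuous ρ)
    (ha : ∀ n : ℕ, a n = (1 / π) * ∫ θ in (0:ℝ)..(2 * π), ρ θ * Real.cos (n * θ))
    (hb : ∀ n : ℕ, b n = (1 / π) * ∫ θ in (0:ℝ)..(2 * π), ρ θ * Real.sin (n * θ))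
    (k : ℕ) (hk : 2 ≤ k)
    (hvan : ∀ n : ℕ, 0 < n → k ∣ n → Even (n / k) → a n = 0 ∧ b n = 0)
    (n : ℤ) (hn : n ≠ 0) (hdvd : (2*k : ℤ) ∣ n) :
    (∫ x in (0:ℝ)..(2*π), Complex.exp (Complex.I * (-n) * x) * (ρ x : ℂ)) = 0 := by
  have hπ : (0:ℝ) < π := Real.pi_pos
  set N : ℕ := n.natAbs with hN
  have hNpos : 0 < N := Int.natAbs_pos.mpr hn
  have hdvdN : 2*k ∣ N := by
    have h2 : ((2*k : ℕ) : ℤ) ∣ n := by push_cast; exact hdvd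
    have h3 := Int.natAbs_dvd_natAbs.mpr h2
    rwa [Int.natAbs_natCast] at h3
  have hkN : k ∣ N := dvd_trans (dvd_mul_left k 2) hdvdN
  have hkne : k ≠ 0 := by omega
  have heven : Even (N / k) := by
    obtain ⟨j, hj⟩ := hdvdN
    refine ⟨j, ?_⟩
    rw [hj]
    rw [show 2*k*j = k*(2*j) by ring, Nat.mul_div_cancel_left _ (by omega)]
    ring
  obtain ⟨haN, hbN⟩ := hvan N hNpos hkN heven
  rw [ha] at haN; rw [hb] at hbN
  have Ca : (∫ θ in (0:ℝ)..(2 * π), ρ θ * Real.cos (N * θ)) = 0 := by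
    have h1 : (1/π : ℝ) ≠ 0 := by positivity
    field_simp at haN
    rw [mul_zero, mul_comm π 2] at haN
    exact haN
  have Cb : (∫ θ in (0:ℝ)..(2 * π), ρ θ * Real.sin (N * θ)) = 0 := by
    field_simp at hbN
    rw [mul_zero, mul_comm π 2] at hbN
    exact hbN
  -- rewrite integrand via cos/sin
  have hrw : ∀ x : ℝ, Complex.exp (Complex.I * (-n) * x) * (ρ x : ℂ)
      = ((ρ x * Real.cos ((n:ℝ) * x) : ℝ) : ℂ) - Complex.I * ((ρ x * Real.sin ((n:ℝ) * x) : ℝ) : ℂ) := by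
    intro x
    have harg : Complex.I * (-n) * (x:ℂ) = ((-((n:ℝ) * x) : ℝ) : ℂ) * Complex.I := by
      push_cast; ring
    rw [harg, Complex.exp_mul_I, ← Complex.ofReal_cos, ← Complex.ofReal_sin,
      Real.cos_neg, Real.sin_neg]
    push_cast
    ring
  have hIc : IntervalIntegrable (fun x => ((ρ x * Real.cos ((n:ℝ) * x) : ℝ) : ℂ)) volume 0 (2*π) := by
    apply Continuous.intervalIntegrable
    exact Complex.continuous_ofReal.comp (hρ.mul (Real.continuous_cos.comp (continuous_const.mul continuous_id)))
  have hIs : IntervalIntegrable (fun x => Complex.I * ((ρ x * Real.sin ((n:ℝ) * x) : ℝ) : ℂ)) volume 0 (2*π) := by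
    apply Continuous.intervalIntegrable
    exact continuous_const.mul (Complex.continuous_ofReal.comp (hρ.mul (Real.continuous_sin.comp (continuous_const.mul continuous_id))))
  rw [intervalIntegral.integral_congr fun x _ => hrw x,
    intervalIntegral.integral_sub hIc hIs, intervalIntegral.integral_const_mul,
    intervalIntegral.integral_ofReal, intervalIntegral.integral_ofReal]
  -- now reduce the two real integrals to the given ones
  have hcast : (n:ℝ) = (N:ℝ) ∨ (n:ℝ) = -(N:ℝ) := by
    rcases Int.natAbs_eq n with h | h
    · left; simp only [hN]; rw [h]; simp [Int.natAbs_abs, Nat.cast_natAbs]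
    · right; simp only [hN]; rw [h]; simp [Int.natAbs_abs, Nat.cast_natAbs]
  have hP : (∫ x in (0:ℝ)..(2*π), ρ x * Real.cos ((n:ℝ) * x)) = 0 := by
    rcases hcast with h | h
    · rw [intervalIntegral.integral_congr fun x _ => by rw [h]]
      exact Ca
    · rw [intervalIntegral.integral_congr fun x _ => by rw [h, neg_mul, Real.cos_neg]]
      exact Ca
  have hQ : (∫ x in (0:ℝ)..(2*π), ρ x * Real.sin ((n:ℝ) * x)) = 0 := by
    rcases hcast with h | h
    · rw [intervalIntegral.integral_congr fun x _ => by rw [h]]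
      exact Cb
    · have heq : ∀ x : ℝ, ρ x * Real.sin ((n:ℝ) * x) = -(ρ x * Real.sin ((N:ℝ) * x)) := by
        intro x; rw [h, neg_mul, Real.sin_neg]; ring
      rw [intervalIntegral.integral_congr fun x _ => heq x, intervalIntegral.integral_neg, Cb]
      ring
  rw [hP, hQ]
  simp

lemma Z_aux (ρ : ℝ → ℝ) (hρ : Continuous ρ) (k : ℕ) (hk : 2 ≤ k)
    (L : ℝ) (hL : L = ∫ x in (0:ℝ)..(2*π), ρ x)
    (In : ℤ → ℂ)
    (hIn : ∀ n : ℤ, In n = ∫ x in (0:ℝ)..(2*π), Complex.exp (Complex.I * (-n) * x) * (ρ x : ℂ))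
    (hshift : ∀ (n : ℤ) (s : ℝ),
      (∫ x in (0:ℝ)..(2*π), Complex.exp (Complex.I * (-n) * x) * (ρ (x + s) : ℂ)) =
        Complex.exp (Complex.I * n * s) * In n)
    (hIn0 : ∀ n : ℤ, n ≠ 0 → (2*k : ℤ) ∣ n → In n = 0)
    (n : ℤ) :
    (∫ x in (0:ℝ)..(2*π),
        Complex.exp (Complex.I * (-n) * x) *
          (((∑ m ∈ range (2*k), ρ (x + m * (π/k)) : ℝ) : ℂ) - (((k:ℝ) / π * L : ℝ) : ℂ))) = 0 := by
  have hπ : (0:ℝ) < π := Real.pi_pos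
  have hπC : (π:ℂ) ≠ 0 := Complex.ofReal_ne_zero.mpr (ne_of_gt hπ)
  have hkC : (k:ℂ) ≠ 0 := by
    simp only [ne_eq, Nat.cast_eq_zero]; omega
  set E : ℝ → ℂ := fun x : ℝ => Complex.exp (Complex.I * (-n) * x) with hE
  have hEcont : Continuous E :=
    Complex.continuous_exp.comp (continuous_const.mul Complex.continuous_ofReal)
  have hint1 : ∀ s : ℝ, IntervalIntegrable
      (fun x => E x * (ρ (x + s) : ℂ)) volume 0 (2*π) := fun s =>
    (hEcont.mul (Complex.continuous_ofReal.comp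
      (hρ.comp (continuous_id.add continuous_const)))).intervalIntegrable _ _
  set c : ℝ := (k:ℝ) / π * L with hc
  have hcong : ∀ x ∈ Set.uIcc (0:ℝ) (2*π),
      E x * (((∑ m ∈ range (2*k), ρ (x + m * (π/k)) : ℝ) : ℂ) - (c : ℂ))
      = (∑ m ∈ range (2*k), E x * (ρ (x + m * (π/k)) : ℂ)) - E x * (c : ℂ) := by
    intro x _
    push_cast
    rw [mul_sub, Finset.mul_sum]
  rw [intervalIntegral.integral_congr hcong]
  have hsumint : IntervalIntegrable
      (fun x => ∑ m ∈ range (2*k), E x * (ρ (x + m * (π/k)) : ℂ)) volume 0 (2*π) :=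
    (continuous_finset_sum _ (fun m _ => hEcont.mul (Complex.continuous_ofReal.comp
      (hρ.comp (continuous_id.add continuous_const))))).intervalIntegrable _ _
  rw [intervalIntegral.integral_sub (g := fun x => E x * (c : ℂ)) hsumint
    ((hEcont.mul continuous_const).intervalIntegrable _ _)]
  have hs2 : (∫ x in (0:ℝ)..(2*π), ∑ m ∈ range (2*k), E x * (ρ (x + m * (π/k)) : ℂ))
      = ∑ m ∈ range (2*k), ∫ x in (0:ℝ)..(2*π), E x * (ρ (x + m * (π/k)) : ℂ) :=
    intervalIntegral.integral_finset_sum (fun m _ => hint1 _)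
  rw [hs2]
  rw [intervalIntegral.integral_mul_const]
  have hterm : ∀ m : ℕ, (∫ x in (0:ℝ)..(2*π), E x * (ρ (x + m * (π/k)) : ℂ))
      = Complex.exp (Complex.I * n * ((m * (π/k) : ℝ) : ℂ)) * In n := fun m => hshift n _
  rw [Finset.sum_congr rfl (fun m _ => hterm m), ← Finset.sum_mul]
  by_cases hn : n = 0
  · subst hn
    have e1 : ∑ m ∈ range (2*k), Complex.exp (Complex.I * ((0:ℤ):ℂ) * ((m * (π/k) : ℝ) : ℂ))
        = ((2*k : ℕ) : ℂ) := by
      rw [Finset.sum_congr rfl (fun m _ => by simp : ∀ m ∈ range (2*k),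
        Complex.exp (Complex.I * ((0:ℤ):ℂ) * ((m * (π/k) : ℝ) : ℂ)) = 1)]
      simp
    rw [e1]
    have e2 : In 0 = (L : ℂ) := by
      rw [hIn 0, hL]
      simp [intervalIntegral.integral_ofReal]
    have e3 : (∫ x in (0:ℝ)..(2*π), E x) = ((2*π : ℝ) : ℂ) := by
      rw [hE]
      simp [intervalIntegral.integral_const]
    rw [e2, e3, hc]
    push_cast
    field_simp
    ring
  · have hc0 : Complex.I * (-(n:ℂ)) ≠ 0 :=
      mul_ne_zero Complex.I_ne_zero (neg_ne_zero.mpr (Int.cast_ne_zero.mpr hn))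
    have hE0 : (∫ x in (0:ℝ)..(2*π), E x) = 0 := by
      have heq : (∫ x in (0:ℝ)..(2*π), E x)
          = (Complex.exp (Complex.I * (-(n:ℂ)) * ((2*π : ℝ):ℂ))
            - Complex.exp (Complex.I * (-(n:ℂ)) * ((0:ℝ):ℂ))) / (Complex.I * (-(n:ℂ))) := by
        rw [hE]
        exact integral_exp_mul_complex hc0
      rw [heq]
      have h1 : Complex.exp (Complex.I * (-(n:ℂ)) * ((2*π : ℝ):ℂ)) = 1 := by
        have harg : Complex.I * (-(n:ℂ)) * ((2*π : ℝ):ℂ) = ((-n : ℤ) : ℂ) * (2*(π:ℂ)*Complex.I) := by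
          push_cast; ring
        rw [harg, Complex.exp_int_mul_two_pi_mul_I]
      rw [h1]
      simp
    rw [hE0, zero_mul, sub_zero]
    by_cases hd : (2*k : ℤ) ∣ n
    · rw [hIn0 n hn hd, mul_zero]
    · set ω : ℂ := Complex.exp (Complex.I * n * ((π/k : ℝ) : ℂ)) with hω
      have hpow : ∀ m : ℕ, Complex.exp (Complex.I * n * ((m * (π/k) : ℝ) : ℂ)) = ω ^ m := by
        intro m
        rw [hω, ← Complex.exp_nat_mul]
        congr 1
        push_cast; ring
      have hω2k : ω ^ (2*k) = 1 := by
        rw [hω, ← Complex.exp_nat_mul]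
        have harg : ((2*k : ℕ):ℂ) * (Complex.I * n * ((π/k : ℝ) : ℂ)) = (n:ℂ) * (2*(π:ℂ)*Complex.I) := by
          push_cast
          field_simp
        rw [harg]
        exact Complex.exp_int_mul_two_pi_mul_I n
      have hωne : ω ≠ 1 := by
        intro h1
        obtain ⟨m, hm⟩ := Complex.exp_eq_one_iff.mp (hω ▸ h1)
        apply hd
        have h2 : (n : ℂ) = ((2*k*m : ℤ) : ℂ) := by
          push_cast at hm ⊢
          field_simp at hm
          have hItop : Complex.I * ((n:ℂ) * (π:ℂ)) = Complex.I * (2 * (k:ℂ) * (m:ℂ) * (π:ℂ)) := by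
            linear_combination (Complex.I * (π:ℂ)) * hm
          have h4 := mul_left_cancel₀ Complex.I_ne_zero hItop
          have h5 := mul_right_cancel₀ hπC (by linear_combination h4 :
            ((n:ℂ)) * (π:ℂ) = (2 * (k:ℂ) * (m:ℂ)) * (π:ℂ))
          linear_combination h5
        have h3 : n = 2*k*m := Int.cast_injective h2
        exact ⟨m, by linarith⟩
      rw [Finset.sum_congr rfl (fun m _ => hpow m), geom_sum_eq hωne, hω2k]
      simp


lemma sym_const (ρ : ℝ → ℝ) (a b : ℕ → ℝ) (hρ : Continuous ρ)
    (hper : ∀ θ, ρ (θ + 2 * π) = ρ θ)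
    (ha : ∀ n : ℕ, a n = (1 / π) * ∫ θ in (0:ℝ)..(2 * π), ρ θ * Real.cos (n * θ))
    (hb : ∀ n : ℕ, b n = (1 / π) * ∫ θ in (0:ℝ)..(2 * π), ρ θ * Real.sin (n * θ))
    (k : ℕ) (hk : 2 ≤ k)
    (hvan : ∀ n : ℕ, 0 < n → k ∣ n → Even (n / k) → a n = 0 ∧ b n = 0) :
    ∀ θ ∈ Set.Ico (0:ℝ) (2*π),
      ∑ m ∈ range (2*k), ρ (θ + m * (π/k)) =
        (k:ℝ) / π * ∫ x in (0:ℝ)..(2*π), ρ x := by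
  have hπ : (0:ℝ) < π := Real.pi_pos
  haveI hT : Fact ((0:ℝ) < 2*π) := ⟨by positivity⟩
  set L : ℝ := ∫ x in (0:ℝ)..(2*π), ρ x with hL
  set G : ℝ → ℂ := fun θ =>
    (((∑ m ∈ range (2*k), ρ (θ + m * (π/k)) : ℝ)) : ℂ) - (((k:ℝ) / π * L : ℝ) : ℂ) with hG
  have hgcont : Continuous fun θ => ∑ m ∈ range (2*k), ρ (θ + m * (π/k)) :=
    continuous_finset_sum _ (fun m _ => hρ.comp (continuous_id.add continuous_const))
  have hGcont : Continuous G :=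
    (Complex.continuous_ofReal.comp hgcont).sub continuous_const
  have hGper0 : G 0 = G (0 + 2*π) := by
    simp only [hG, zero_add]
    congr 2
    apply Finset.sum_congr rfl
    intro m _
    rw [show (2*π) + (m:ℝ) * (π/k) = (m * (π/k)) + 2*π by ring, hper]
  set In : ℤ → ℂ := fun n =>
    ∫ x in (0:ℝ)..(2*π), Complex.exp (Complex.I * (-n) * x) * (ρ x : ℂ) with hIn
  have hshift := fun (n : ℤ) (s : ℝ) => shift_aux ρ hρ hper n s
  have hIn0 := fun (n : ℤ) (hn : n ≠ 0) (hd : (2*k : ℤ) ∣ n) =>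
    In0_aux ρ a b hρ ha hb k hk hvan n hn hd
  have hZ : ∀ n : ℤ, (∫ x in (0:ℝ)..(2*π), Complex.exp (Complex.I * (-n) * x) * G x) = 0 :=
    fun n => Z_aux ρ hρ k hk L rfl In (fun _ => rfl) hshift hIn0 n
  set F : C(AddCircle (2*π), ℂ) :=
    ⟨AddCircle.liftIco (2*π) 0 G, AddCircle.liftIco_zero_continuous
      (by rw [hGper0]; norm_num) hGcont.continuousOn⟩ with hF
  have hFC : ∀ n : ℤ, fourierCoeff (F : AddCircle (2*π) → ℂ) n = 0 := by
    intro n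
    have h1 : fourierCoeff (F : AddCircle (2*π) → ℂ) n
        = fourierCoeffOn (lt_add_of_pos_right 0 hT.out) G n :=
      fourierCoeff_liftIco_eq G n
    rw [h1, fourierCoeffOn_eq_integral]
    have h2 : (∫ x in (0:ℝ)..(0+2*π),
        fourier (-n) (x : AddCircle (0+2*π-0)) • G x) = 0 := by
      rw [intervalIntegral.integral_congr (g := fun x => Complex.exp (Complex.I * (-n) * x) * G x)]
      · rw [zero_add]; exact hZ n
      · intro x _
        simp only [fourier_coe_apply, smul_eq_mul]
        congr 2
        have hπC : (π:ℂ) ≠ 0 := Complex.ofReal_ne_zero.mpr (ne_of_gt hπ)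
        push_cast
        field_simp
        ring
    rw [h2, smul_zero]
  have hF0 := fourier_unique F hFC
  intro θ hθ
  have hθ' : θ ∈ Set.Ico (0:ℝ) (0 + 2*π) := by rwa [zero_add]
  have h3 : F (θ : AddCircle (2*π)) = G θ := AddCircle.liftIco_coe_apply (f := G) hθ'
  have h4 : G θ = 0 := by rw [← h3, hF0]
  have h5 := sub_eq_zero.mp h4
  exact_mod_cast h5


theorem sharp_dual_chernoff_ou_pan (ρ : ℝ → ℝ) (a b : ℕ → ℝ)
    (hρ : Continuous ρ) (hpos : ∀ θ, 0 < ρ θ) (hper : ∀ θ, ρ (θ + 2 * π) = ρ θ)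
    (ha : ∀ n : ℕ, a n = (1 / π) * ∫ θ in (0:ℝ)..(2 * π), ρ θ * Real.cos (n * θ))
    (hb : ∀ n : ℕ, b n = (1 / π) * ∫ θ in (0:ℝ)..(2 * π), ρ θ * Real.sin (n * θ))
    (k : ℕ) (hk : 2 ≤ k)
    (hvan : ∀ n : ℕ, 0 < n → k ∣ n → Even (n / k) → a n = 0 ∧ b n = 0)
    (lam : ℝ) (hlam0 : 0 ≤ lam) (hlam1 : lam ≤ (k : ℝ) / π) :
    (∫ θ in (0:ℝ)..(π / k),
        (∑ m ∈ Finset.range k, ρ (θ + 2 * (m:ℝ) * π / k)) *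
        (∑ m ∈ Finset.range k, ρ (θ + π / k + 2 * (m:ℝ) * π / k)))
      ≤ (k : ℝ) * ((1 / 2) * ∫ θ in (0:ℝ)..(2 * π), (ρ θ) ^ 2) +
        lam * (((1 / 2) * ∫ θ in (0:ℝ)..(2 * π), ρ θ) ^ 2 -
               π * ((1 / 2) * ∫ θ in (0:ℝ)..(2 * π), (ρ θ) ^ 2)) := by
  have hπ : (0:ℝ) < π := Real.pi_pos
  have hk0 : (0:ℝ) < k := by
    have : (2:ℝ) ≤ (k:ℝ) := by exact_mod_cast hk
    linarith
  have hk2 : (2:ℝ) ≤ (k:ℝ) := by exact_mod_cast hk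
  set L : ℝ := ∫ θ in (0:ℝ)..(2*π), ρ θ with hL
  set A2 : ℝ := ∫ θ in (0:ℝ)..(2*π), (ρ θ)^2 with hA2
  have hsym := sym_const ρ a b hρ hper ha hb k hk hvan
  set p : ℝ → ℝ := fun θ => ∑ m ∈ Finset.range k, ρ (θ + 2 * (m:ℝ) * π / k) with hp
  set q : ℝ → ℝ := fun θ => ∑ m ∈ Finset.range k, ρ (θ + π / k + 2 * (m:ℝ) * π / k) with hq
  have hpq : ∀ θ : ℝ, p θ + q θ = ∑ m ∈ range (2*k), ρ (θ + m * (π/k)) := by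
    intro θ
    rw [sum_range_two_mul (fun m => ρ (θ + m * (π/k))) k]
    congr 1
    · apply Finset.sum_congr rfl; intro m _; congr 1; push_cast; ring
    · apply Finset.sum_congr rfl; intro m _; congr 1; push_cast; ring
  have hc : ∀ θ ∈ Set.Icc (0:ℝ) (π/k), p θ + q θ = (k:ℝ)/π * L := by
    intro θ hθ
    rw [hpq θ]
    apply hsym
    refine ⟨hθ.1, ?_⟩
    have h1 : π/(k:ℝ) ≤ π/2 := by
      apply div_le_div_of_nonneg_left hπ.le (by norm_num) hk2
    have := hθ.2
    nlinarith
  have hbound : ∀ θ ∈ Set.Icc (0:ℝ) (π/k), p θ * q θ ≤ (((k:ℝ)/π*L)/2)^2 := by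
    intro θ hθ
    have h2 := hc θ hθ
    have h3 : (p θ + q θ)^2 = ((k:ℝ)/π*L)^2 := by rw [h2]
    nlinarith [sq_nonneg (p θ - q θ), h3]
  have hpcont : Continuous p :=
    continuous_finset_sum _ (fun m _ => hρ.comp (continuous_id.add continuous_const))
  have hqcont : Continuous q :=
    continuous_finset_sum _ (fun m _ => hρ.comp ((continuous_id.add continuous_const).add
      continuous_const))
  have hmono : (∫ θ in (0:ℝ)..(π/k), p θ * q θ)
      ≤ ∫ _ in (0:ℝ)..(π/k), (((k:ℝ)/π*L)/2)^2 :=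
    intervalIntegral.integral_mono_on (by positivity)
      ((hpcont.mul hqcont).intervalIntegrable _ _) intervalIntegrable_const hbound
  rw [intervalIntegral.integral_const, smul_eq_mul, sub_zero] at hmono
  have e4 : (π/(k:ℝ)) * ((((k:ℝ)/π*L))/2)^2 = (k:ℝ)/π * L^2/4 := by
    field_simp
    ring
  rw [e4] at hmono
  -- Cauchy–Schwarz
  have hCS : L^2 ≤ 2*π*A2 := by
    have h0 : (0:ℝ) ≤ ∫ x in (0:ℝ)..(2*π), (ρ x - L/(2*π))^2 :=
      intervalIntegral.integral_nonneg (by positivity) (fun x _ => sq_nonneg _)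
    have hd : ∀ x ∈ Set.uIcc (0:ℝ) (2*π), (ρ x - L/(2*π))^2
        = ((ρ x)^2 - (L/π) * ρ x) + (L/(2*π))^2 := by
      intro x _
      field_simp
      ring
    have he : (∫ x in (0:ℝ)..(2*π), (ρ x - L/(2*π))^2)
        = (A2 - (L/π)*L) + (L/(2*π))^2*(2*π) := by
      rw [intervalIntegral.integral_congr hd]
      rw [intervalIntegral.integral_add (f := fun x => (ρ x)^2 - (L/π) * ρ x) ((((hρ.pow 2).sub
        (continuous_const.mul hρ))).intervalIntegrable _ _) intervalIntegrable_const]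
      rw [intervalIntegral.integral_sub (f := fun x => (ρ x)^2) (g := fun x => (L/π) * ρ x) ((hρ.pow 2).intervalIntegrable _ _)
        ((continuous_const.mul hρ).intervalIntegrable _ _)]
      rw [intervalIntegral.integral_const_mul, intervalIntegral.integral_const,
        smul_eq_mul, sub_zero]
      rw [← hL, ← hA2]
      ring
    rw [he] at h0
    have he3 : (A2 - (L/π)*L) + (L/(2*π))^2*(2*π) = A2 - L^2/(2*π) := by
      field_simp
      ring
    rw [he3] at h0
    have := (div_le_iff₀ (by positivity : (0:ℝ) < 2*π)).mp (by linarith : L^2/(2*π) ≤ A2)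
    linarith
  -- final arithmetic
  have hD : (0:ℝ) ≤ π*((1/2)*A2) - ((1/2)*L)^2 := by nlinarith
  have hmul : lam * (π*((1/2)*A2) - ((1/2)*L)^2)
      ≤ ((k:ℝ)/π) * (π*((1/2)*A2) - ((1/2)*L)^2) :=
    mul_le_mul_of_nonneg_right hlam1 hD
  have e6 : ((k:ℝ)/π) * (π*((1/2)*A2) - ((1/2)*L)^2)
      = (k:ℝ)*((1/2)*A2) - ((k:ℝ)/π) * L^2/4 := by
    field_simp
    ring
  rw [e6] at hmul
  linarith
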